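/- Let μ be a Radon measure on ℝⁿ satisfying μ(B_R(x)) ≤ D ω_{n−1} R^{n−1} for all x ∈ ℝⁿ and R > 0, where ω_{n−1} is the volume of the unit ball in ℝ^{n−1}. Define ρ_x^r(y) = (√(2π) r)^{−(n−1)} exp(−|y−x|²/(2r²)). Then for all r > 0 and x ∈ ℝⁿ, ∫_{ℝⁿ} ρ_x^r dμ ≤ D. -/

import Mathlib

open MeasureTheory Set

/-- Gaussian normalization on `EuclideanSpace ℝ (Fin m)`. -/
lemma aux_gauss_lintegral (m : ℕ) (r : ℝ) (hr : 0 < r) :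
    ∫⁻ y : EuclideanSpace ℝ (Fin m), ENNReal.ofReal
      (((Real.sqrt (2 * Real.pi) * r) ^ m)⁻¹ * Real.exp (-‖y‖ ^ 2 / (2 * r ^ 2))) ∂volume
      = 1 := by
  have h2pi : (0:ℝ) < 2 * Real.pi := by positivity
  have hsq : 0 < Real.sqrt (2 * Real.pi) := Real.sqrt_pos.mpr h2pi
  set a : ℝ := Real.sqrt (2 * Real.pi) * r with ha
  have ha0 : 0 < a := by positivity
  set b : ℝ := (2 * r ^ 2)⁻¹ with hb
  have hb0 : 0 < b := by positivity
  have hgi : Integrable (fun v : EuclideanSpace ℝ (Fin m) => Real.exp (-b * ‖v‖ ^ 2)) := by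
    have h := GaussianFourier.integrable_cexp_neg_mul_sq_norm_add (V := EuclideanSpace ℝ (Fin m))
      (b := (b:ℂ)) (by simpa using hb0) 0 0
    simp only [zero_mul, add_zero] at h
    refine h.norm.congr (Filter.Eventually.of_forall fun v => ?_)
    show ‖Complex.exp (-(b:ℂ) * (‖v‖:ℂ) ^ 2)‖ = Real.exp (-b * ‖v‖ ^ 2)
    rw [Complex.norm_exp]
    have hcast : ((-b * ‖v‖ ^ 2 : ℝ) : ℂ) = -(b:ℂ) * (‖v‖:ℂ) ^ 2 := by push_cast; ring
    rw [← hcast, Complex.ofReal_re]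
  have hval : ∫ v : EuclideanSpace ℝ (Fin m), Real.exp (-b * ‖v‖ ^ 2) = a ^ m := by
    rw [GaussianFourier.integral_rexp_neg_mul_sq_norm hb0, finrank_euclideanSpace_fin]
    have h1 : Real.pi / b = a ^ 2 := by
      rw [hb, ha, mul_pow, Real.sq_sqrt h2pi.le]
      field_simp
    rw [h1, ← Real.rpow_natCast a 2, ← Real.rpow_mul ha0.le, ← Real.rpow_natCast a m]
    congr 1
    push_cast
    ring
  have heq : ∀ y : EuclideanSpace ℝ (Fin m),
      (a ^ m)⁻¹ * Real.exp (-‖y‖ ^ 2 / (2 * r ^ 2)) = (a ^ m)⁻¹ * Real.exp (-b * ‖y‖ ^ 2) := by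
    intro y
    congr 1
    rw [hb]
    field_simp
  simp_rw [heq]
  rw [← ofReal_integral_eq_lintegral_ofReal (hgi.const_mul _)
    (Filter.Eventually.of_forall fun y => by positivity)]
  rw [integral_const_mul, hval, inv_mul_cancel₀ (by positivity)]
  simp

/- STATEMENT 5: if μ is a Radon measure on ℝⁿ with μ(B_R(x)) ≤ D ω_{n−1} R^{n−1} for all x, R,
then ∫ ρ_x^r dμ ≤ D, where ρ_x^r(y) = (√(2π) r)^{−(n−1)} exp(−|y−x|²/(2r²)). -/
theorem gaussian_kernel_integral_bound
    (n : ℕ) (hn : 2 ≤ n) (μ : Measure (EuclideanSpace ℝ (Fin n)))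
    [IsLocallyFiniteMeasure μ] (D : ℝ) (hD : 0 < D)
    (hμ : ∀ (x : EuclideanSpace ℝ (Fin n)) (R : ℝ), 0 < R →
      μ (Metric.ball x R) ≤ ENNReal.ofReal
        (D * (volume (Metric.ball (0 : EuclideanSpace ℝ (Fin (n - 1))) 1)).toReal *
          R ^ (n - 1)))
    (x : EuclideanSpace ℝ (Fin n)) (r : ℝ) (hr : 0 < r) :
    ∫⁻ y, ENNReal.ofReal
        (((Real.sqrt (2 * Real.pi) * r) ^ (n - 1))⁻¹ *
          Real.exp (-‖y - x‖ ^ 2 / (2 * r ^ 2))) ∂μ ≤ ENNReal.ofReal D := by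
  set m := n - 1 with hmdef
  have hm : 1 ≤ m := by omega
  haveI : Nonempty (Fin m) := ⟨⟨0, by omega⟩⟩
  have h2pi : (0:ℝ) < 2 * Real.pi := by positivity
  have hsq : 0 < Real.sqrt (2 * Real.pi) := Real.sqrt_pos.mpr h2pi
  set c : ℝ := (Real.sqrt (2 * Real.pi) * r) ^ m with hc
  have hc0 : 0 < c := by positivity
  set ω : ENNReal := volume (Metric.ball (0 : EuclideanSpace ℝ (Fin m)) 1) with hω
  have hωfin : ω ≠ ⊤ := measure_ball_lt_top.ne
  set f : EuclideanSpace ℝ (Fin n) → ℝ :=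
    fun y => c⁻¹ * Real.exp (-‖y - x‖ ^ 2 / (2 * r ^ 2)) with hf
  set g : EuclideanSpace ℝ (Fin m) → ℝ :=
    fun y => c⁻¹ * Real.exp (-‖y‖ ^ 2 / (2 * r ^ 2)) with hg
  have hf_cont : Continuous f := by
    apply Continuous.mul continuous_const
    exact (Real.continuous_exp.comp (by fun_prop))
  have hg_cont : Continuous g := by
    apply Continuous.mul continuous_const
    exact (Real.continuous_exp.comp (by fun_prop))
  -- the key superlevel-set comparison
  have key : ∀ t : ℝ, 0 < t →
      μ {y | t < f y} ≤ ENNReal.ofReal D * volume {y : EuclideanSpace ℝ (Fin m) | t < g y} := by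
    intro t ht
    by_cases htc : t < c⁻¹
    · -- superlevel sets are balls of radius R
      have hct1 : c * t < 1 := by
        calc c * t < c * c⁻¹ := by
              exact mul_lt_mul_of_pos_left htc hc0
          _ = 1 := mul_inv_cancel₀ hc0.ne'
      have hlog : Real.log (c * t) < 0 := Real.log_neg (by positivity) hct1
      set R : ℝ := Real.sqrt (-(2 * r ^ 2) * Real.log (c * t)) with hR
      have hR2 : 0 < -(2 * r ^ 2) * Real.log (c * t) := by
        apply mul_pos_of_neg_of_neg _ hlog
        nlinarith
      have hR0 : 0 < R := Real.sqrt_pos.mpr hR2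
      have hiff : ∀ s : ℝ, 0 ≤ s →
          (t < c⁻¹ * Real.exp (-s / (2 * r ^ 2)) ↔ s < R ^ 2) := by
        intro s hs
        rw [hR, Real.sq_sqrt hR2.le]
        constructor
        · intro h
          have h1 : c * t < Real.exp (-s / (2 * r ^ 2)) := by
            have := mul_lt_mul_of_pos_left h hc0
            rwa [← mul_assoc, mul_inv_cancel₀ hc0.ne', one_mul] at this
          have h2 : Real.log (c * t) < -s / (2 * r ^ 2) :=
            (Real.log_lt_iff_lt_exp (by positivity)).mpr h1
          rw [lt_div_iff₀ (by positivity : (0:ℝ) < 2 * r ^ 2)] at h2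
          nlinarith
        · intro h
          have h2 : Real.log (c * t) < -s / (2 * r ^ 2) := by
            rw [lt_div_iff₀ (by positivity : (0:ℝ) < 2 * r ^ 2)]
            nlinarith
          have h1 : c * t < Real.exp (-s / (2 * r ^ 2)) :=
            (Real.log_lt_iff_lt_exp (by positivity)).mp h2
          have := mul_lt_mul_of_pos_left h1 (inv_pos.mpr hc0)
          rwa [← mul_assoc, inv_mul_cancel₀ hc0.ne', one_mul] at this
      have hnormiff : ∀ u : ℝ, 0 ≤ u → (u ^ 2 < R ^ 2 ↔ u < R) := by
        intro u hu
        constructor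
        · intro h; nlinarith
        · intro h; nlinarith
      have hsetf : {y | t < f y} = Metric.ball x R := by
        ext y
        simp only [Set.mem_setOf_eq, Metric.mem_ball, dist_eq_norm, hf]
        rw [hiff _ (by positivity), hnormiff _ (norm_nonneg _)]
      have hsetg : {y : EuclideanSpace ℝ (Fin m) | t < g y} = Metric.ball 0 R := by
        ext y
        simp only [Set.mem_setOf_eq, Metric.mem_ball, dist_eq_norm, sub_zero, hg]
        rw [hiff _ (by positivity), hnormiff _ (norm_nonneg _)]
      rw [hsetf, hsetg]
      have hb : volume (Metric.ball (0 : EuclideanSpace ℝ (Fin m)) R)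
          = ENNReal.ofReal (R ^ Module.finrank ℝ (EuclideanSpace ℝ (Fin m))) * ω := by
        rw [hω]
        exact Measure.addHaar_ball volume 0 hR0.le
      rw [hb, finrank_euclideanSpace_fin]
      calc μ (Metric.ball x R) ≤ ENNReal.ofReal (D * ω.toReal * R ^ m) := hμ x R hR0
        _ = ENNReal.ofReal D * (ENNReal.ofReal (R ^ m) * ω) := by
            rw [ENNReal.ofReal_mul (by positivity), ENNReal.ofReal_mul hD.le,
              ENNReal.ofReal_toReal hωfin]
            ring
    · -- superlevel set is empty
      have : {y | t < f y} = ∅ := by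
        ext y
        simp only [Set.mem_setOf_eq, Set.mem_empty_iff_false, iff_false, not_lt, hf]
        calc c⁻¹ * Real.exp (-‖y - x‖ ^ 2 / (2 * r ^ 2))
            ≤ c⁻¹ * 1 := by
              apply mul_le_mul_of_nonneg_left _ (by positivity)
              rw [← Real.exp_zero]
              apply Real.exp_le_exp.mpr
              have : (0:ℝ) ≤ ‖y - x‖ ^ 2 := by positivity
              have h2 : (0:ℝ) < 2 * r ^ 2 := by positivity
              rw [div_le_iff₀ h2]
              nlinarith
          _ = c⁻¹ := mul_one _
          _ ≤ t := le_of_not_gt htc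
      rw [this]
      simp
  -- layer cake on μ
  have hlayer : ∫⁻ y, ENNReal.ofReal (f y) ∂μ = ∫⁻ t in Ioi 0, μ {y | t < f y} :=
    lintegral_eq_lintegral_meas_lt μ
      (Filter.Eventually.of_forall fun y => by positivity)
      hf_cont.measurable.aemeasurable
  have hlayer' : ∫⁻ y, ENNReal.ofReal (g y) ∂(volume : Measure (EuclideanSpace ℝ (Fin m)))
      = ∫⁻ t in Ioi 0, volume {y : EuclideanSpace ℝ (Fin m) | t < g y} :=
    lintegral_eq_lintegral_meas_lt volume
      (Filter.Eventually.of_forall fun y => by positivity)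
      hg_cont.measurable.aemeasurable
  calc ∫⁻ y, ENNReal.ofReal (f y) ∂μ
      = ∫⁻ t in Ioi 0, μ {y | t < f y} := hlayer
    _ ≤ ∫⁻ t in Ioi 0, ENNReal.ofReal D *
          volume {y : EuclideanSpace ℝ (Fin m) | t < g y} := by
        refine lintegral_mono_ae ?_
        filter_upwards [ae_restrict_mem measurableSet_Ioi] with t ht
        exact key t ht
    _ = ENNReal.ofReal D * ∫⁻ t in Ioi 0,
          volume {y : EuclideanSpace ℝ (Fin m) | t < g y} := by
        rw [lintegral_const_mul' _ _ ENNReal.ofReal_ne_top]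
    _ = ENNReal.ofReal D * ∫⁻ y, ENNReal.ofReal (g y) ∂volume := by rw [hlayer']
    _ = ENNReal.ofReal D * 1 := by rw [hg, hc, aux_gauss_lintegral m r hr]
    _ = ENNReal.ofReal D := mul_one _
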